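/- For all real a, c and ε, the function H(x,y) = (1+x)^(−2c)·(1+y)^(−2a)·(x⁴ + y² + ε x²) is a first integral, on {x > −1, y > −1}, of the system ẋ = −ε x(a x + a x²) + y + xy + (1−a)y² + (1−a)xy² − a x⁴ − a x⁵, ẏ = −ε x(1 + (1−c)x + y + (1−c)xy) + c y² − 2x³ + c y³ − 2x³ y + (c−2)x⁴(1+y). -/

import Mathlib

theorem darboux_first_integral_perturbed (a c ε : ℝ) :
    ∀ x y : ℝ, x > -1 → y > -1 →
      (-ε*x*(a*x + a*x^2) + y + x*y + (1-a)*y^2 + (1-a)*x*y^2 - a*x^4 - a*x^5) *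
        deriv (fun x : ℝ =>
          (1+x) ^ (-(2*c)) * (1+y) ^ (-(2*a)) * (x^4 + y^2 + ε*x^2)) x +
      (-ε*x*(1 + (1-c)*x + y + (1-c)*x*y)
        + c*y^2 - 2*x^3 + c*y^3 - 2*x^3*y + (c-2)*x^4*(1+y)) *
        deriv (fun y : ℝ =>
          (1+x) ^ (-(2*c)) * (1+y) ^ (-(2*a)) * (x^4 + y^2 + ε*x^2)) y = 0 := by
  intro x y hx hy
  have hxp : (0:ℝ) < 1 + x := by linarith
  have hyp : (0:ℝ) < 1 + y := by linarith
  have hxne : (1:ℝ) + x ≠ 0 := ne_of_gt hxp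
  have hyne : (1:ℝ) + y ≠ 0 := ne_of_gt hyp
  -- derivative in x
  have h1 : HasDerivAt (fun x : ℝ => (1+x) ^ (-(2*c)))
      (-(2*c * (1+x) ^ (-(2*c)-1))) x := by
    simpa using ((hasDerivAt_id x).const_add 1).rpow_const (p := -(2*c)) (Or.inl hxne)
  have h2 : HasDerivAt (fun x : ℝ => x^4 + y^2 + ε*x^2) (4*x^3 + ε*(2*x)) x := by
    have := ((hasDerivAt_pow 4 x).add_const (y^2)).add ((hasDerivAt_pow 2 x).const_mul ε)
    simpa [add_assoc, Pi.add_def] using this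
  have hDx : HasDerivAt (fun x : ℝ =>
      (1+x) ^ (-(2*c)) * (1+y) ^ (-(2*a)) * (x^4 + y^2 + ε*x^2))
      (-(2*c * (1+x) ^ (-(2*c)-1)) * (1+y) ^ (-(2*a)) * (x^4 + y^2 + ε*x^2)
        + (1+x) ^ (-(2*c)) * (1+y) ^ (-(2*a)) * (4*x^3 + ε*(2*x))) x := by
    exact (h1.mul_const ((1+y) ^ (-(2*a)))).mul h2
  -- derivative in y
  have h3 : HasDerivAt (fun y : ℝ => (1+y) ^ (-(2*a)))
      (-(2*a * (1+y) ^ (-(2*a)-1))) y := by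
    simpa using ((hasDerivAt_id y).const_add 1).rpow_const (p := -(2*a)) (Or.inl hyne)
  have h4 : HasDerivAt (fun y : ℝ => x^4 + y^2 + ε*x^2) (2*y) y := by
    have := (((hasDerivAt_pow 2 y).const_add (x^4)).add_const (ε*x^2))
    simpa using this
  have hDy : HasDerivAt (fun y : ℝ =>
      (1+x) ^ (-(2*c)) * (1+y) ^ (-(2*a)) * (x^4 + y^2 + ε*x^2))
      ((1+x) ^ (-(2*c)) * (-(2*a * (1+y) ^ (-(2*a)-1))) * (x^4 + y^2 + ε*x^2)
        + (1+x) ^ (-(2*c)) * (1+y) ^ (-(2*a)) * (2*y)) y := by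
    exact (h3.const_mul ((1+x) ^ (-(2*c)))).mul h4
  rw [hDx.deriv, hDy.deriv]
  have ex : (1+x) ^ (-(2*c)-1) = (1+x) ^ (-(2*c)) / (1+x) := by
    rw [Real.rpow_sub hxp, Real.rpow_one]
  have ey : (1+y) ^ (-(2*a)-1) = (1+y) ^ (-(2*a)) / (1+y) := by
    rw [Real.rpow_sub hyp, Real.rpow_one]
  rw [ex, ey]
  field_simp
  ring
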